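/- Let p be an odd prime and let a, b ∈ ℤ/pℤ with a ≠ b. Let Q ∈ (ℤ/pℤ)[x] be the polynomial with (x - a)·(x - b)·Q = x^p - x, and define g(x) = (b-a)^2·Q(x) + x. Then g represents the transposition (a b) on ℤ/pℤ; that is, g(a) = b, g(b) = a, and g(c) = c for every c ∈ ℤ/pℤ with c ≠ a and c ≠ b. -/
import Mathlib


open Polynomial

/-- For an odd prime `p` and distinct `a b : ℤ/pℤ`, if `Q` is the quotient of `x^p - x`
by `(x - a)(x - b)`, then `g(x) = (b-a)²·Q(x) + x` represents the transposition `(a b)`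
on `ℤ/pℤ`. -/
theorem stmt_15 (p : ℕ) (hp : p.Prime) (hodd : Odd p) (a b : ZMod p) (hab : a ≠ b)
    (Q g : Polynomial (ZMod p))
    (hQ : ((X : Polynomial (ZMod p)) - C a) * (X - C b) * Q = X ^ p - X)
    (hg : g = C ((b - a) ^ 2) * Q + X) :
    g.eval a = b ∧ g.eval b = a ∧ ∀ c : ZMod p, c ≠ a → c ≠ b → g.eval c = c := by
  haveI : Fact p.Prime := ⟨hp⟩
  have hp0 : (p : ZMod p) = 0 := ZMod.natCast_self p
  have hd := congrArg (fun f => Polynomial.eval a (derivative f)) hQ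
  have hd' := congrArg (fun f => Polynomial.eval b (derivative f)) hQ
  simp [derivative_mul, derivative_pow, hp0] at hd hd'
  have ha : g.eval a = b := by
    rw [hg]
    simp only [eval_add, eval_mul, eval_C, eval_X]
    have : (b - a) ^ 2 * Q.eval a = b - a := by
      have h1 : (a - b) * Q.eval a = -1 := by linear_combination hd
      ring_nf
      linear_combination (a - b) * h1
    rw [this]; ring
  have hb : g.eval b = a := by
    rw [hg]
    simp only [eval_add, eval_mul, eval_C, eval_X]
    have : (b - a) ^ 2 * Q.eval b = a - b := by
      have h1 : (b - a) * Q.eval b = -1 := by linear_combination hd'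
      ring_nf
      linear_combination (b - a) * h1
    rw [this]; ring
  refine ⟨ha, hb, fun c hca hcb => ?_⟩
  have hc := congrArg (Polynomial.eval c) hQ
  simp only [eval_mul, eval_sub, eval_pow, eval_X, eval_C, ZMod.pow_card, sub_self] at hc
  have hQc : Q.eval c = 0 := by
    rcases mul_eq_zero.mp hc with h | h
    · rcases mul_eq_zero.mp h with h | h
      · exact absurd (sub_eq_zero.mp h) hca
      · exact absurd (sub_eq_zero.mp h) hcb
    · exact h
  rw [hg]; simp [hQc]
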